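/- The function J(x) = sup_{λ≥0}(β_λ(x) − λ) on ℝ^d is lower semicontinuous and convex, its effective domain D_J = {x ∈ ℝ^d : J(x) < ∞} equals the closed unit ball of the 1-norm {x : ‖x‖₁ ≤ 1}, J is continuous on D_J, and J is a good rate function, i.e. its level sets {x : J(x) ≤ c} are compact for every c ∈ ℝ. -/

import Mathlib

open MeasureTheory ProbabilityTheory Filter Topology Set Pointwise

noncomputable section

namespace RWRP

/-- The `2d` unit steps in `ℤ^d`. -/
def unitSteps (d : ℕ) : Finset (Fin d → ℤ) :=
  (Finset.univ : Finset (Fin d × Bool)).image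
    (fun p => fun j => if j = p.1 then (if p.2 then 1 else -1) else 0)

/-- The uniform distribution on the `2d` unit steps of `ℤ^d`. -/
def stepDist (d : ℕ) : Measure (Fin d → ℤ) :=
  ((unitSteps d).card : ENNReal)⁻¹ • ∑ s ∈ unitSteps d, Measure.dirac s

/-- `S` is the symmetric nearest-neighbor random walk on `ℤ^d` under `P`, started at the
origin: `S 0 = 0` and the increments are i.i.d., uniformly distributed on the unit steps. -/
def IsSRW {d : ℕ} {Ω : Type*} [MeasurableSpace Ω] (P : Measure Ω)
    (S : ℕ → Ω → Fin d → ℤ) : Prop :=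
  (∀ ω, S 0 ω = 0) ∧ (∀ n, Measurable (S n)) ∧
    (∀ n, Measure.map (fun ω => S (n + 1) ω - S n ω) P = stepDist d) ∧
    iIndepFun (fun n ω => S (n + 1) ω - S n ω) P

/-- The `ℓ¹`-norm of a point of `ℤ^d`. -/
def norm1Z {d : ℕ} (x : Fin d → ℤ) : ℝ := ∑ i, |(x i : ℝ)|

/-- The `ℓ¹`-norm on `ℝ^d`. -/
def norm1R {d : ℕ} (x : Fin d → ℝ) : ℝ := ∑ i, |x i|

/-- The embedding `ℤ^d → ℝ^d`. -/
def zToR {d : ℕ} (x : Fin d → ℤ) : Fin d → ℝ := fun i => (x i : ℝ)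

/-- Euclidean scalar product on `ℝ^d`. -/
def dotR {d : ℕ} (h x : Fin d → ℝ) : ℝ := ∑ i, h i * x i

/-- `f` is a norm on `ℝ^d`. -/
def IsNorm {d : ℕ} (f : (Fin d → ℝ) → ℝ) : Prop :=
  (∀ x, 0 ≤ f x) ∧ (∀ x, f x = 0 ↔ x = 0) ∧
    (∀ (c : ℝ) (x), f (c • x) = |c| * f x) ∧ ∀ x y, f (x + y) ≤ f x + f y

/-- The dual norm `f*(ℓ) = sup_{x ≠ 0} (ℓ·x)/f(x)`. -/
def dualNorm {d : ℕ} (f : (Fin d → ℝ) → ℝ) (ℓ : Fin d → ℝ) : ℝ :=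
  ⨆ x : {x : Fin d → ℝ // x ≠ 0}, dotR ℓ x.1 / f x.1

/-- Number of visits of the walk to `x` during `1 ≤ m ≤ n`. -/
def localTime {d : ℕ} {Ω : Type*} (S : ℕ → Ω → Fin d → ℤ) (x : Fin d → ℤ) (n : ℕ)
    (ω : Ω) : ℕ :=
  ((Finset.Icc 1 n).filter (fun m => S m ω = x)).card

/-- Time of the first visit of the walk to the site `x`. -/
def hitTime {d : ℕ} {Ω : Type*} (S : ℕ → Ω → Fin d → ℤ) (x : Fin d → ℤ) (ω : Ω) : ℕ :=
  sInf {n : ℕ | S n ω = x}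

/-- The event that the walk ever visits the site `x`, i.e. `H(x) < ∞`. -/
def hits {d : ℕ} {Ω : Type*} (S : ℕ → Ω → Fin d → ℤ) (x : Fin d → ℤ) : Set Ω :=
  {ω | ∃ n, S n ω = x}

/-- Entrance time of the walk into the half-space `{x : ℓ·x ≥ u}`. -/
def hitHalf {d : ℕ} {Ω : Type*} (S : ℕ → Ω → Fin d → ℤ) (ℓ : Fin d → ℝ) (u : ℝ)
    (ω : Ω) : ℕ :=
  sInf {n : ℕ | u ≤ dotR ℓ (zToR (S n ω))}

/-- The annealed path potential `Φ(n) = Σ_{x ∈ ℤ^d} φ(l_x(n))`. -/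
def annPotential {d : ℕ} {Ω : Type*} (φ : ℝ → ℝ) (S : ℕ → Ω → Fin d → ℤ) (n : ℕ)
    (ω : Ω) : ℝ :=
  ∑' x : Fin d → ℤ, φ (localTime S x n ω)

/-- Assumptions (An) on the annealed potential shape function `φ`. -/
def IsGoodPhi (φ : ℝ → ℝ) : Prop :=
  φ 0 = 0 ∧ (∀ t, 0 ≤ t → 0 ≤ φ t) ∧ MonotoneOn φ (Ici 0) ∧ ConcaveOn ℝ (Ici 0) φ ∧
    (∃ t, 0 ≤ t ∧ φ t ≠ 0) ∧ Tendsto (fun t => φ t / t) atTop (𝓝 0)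

/-- The annealed two-point function `b_λ(x)`. -/
def twoPointB {d : ℕ} {Ω : Type*} [MeasurableSpace Ω] (P : Measure Ω) (φ : ℝ → ℝ)
    (S : ℕ → Ω → Fin d → ℤ) (lam : ℝ) (x : Fin d → ℤ) : ℝ :=
  -Real.log (∫ ω, Set.indicator (hits S x)
    (fun ω' => Real.exp (-(lam * (hitTime S x ω' : ℝ))
      - annPotential φ S (hitTime S x ω') ω')) ω ∂P)

/-- The quenched path potential `Ψ(n,ω) = Σ_{1 ≤ m ≤ n} V_{S(m)}(ω)`. -/
def quPotential {d : ℕ} {Ω Ωe : Type*} (V : (Fin d → ℤ) → Ωe → ℝ)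
    (S : ℕ → Ω → Fin d → ℤ) (n : ℕ) (ωe : Ωe) (ω : Ω) : ℝ :=
  ∑ m ∈ Finset.Icc 1 n, V (S m ω) ωe

/-- The quenched two-point function `a_λ(x,ω)`. -/
def twoPointA {d : ℕ} {Ω Ωe : Type*} [MeasurableSpace Ω] (P : Measure Ω)
    (V : (Fin d → ℤ) → Ωe → ℝ) (S : ℕ → Ω → Fin d → ℤ) (lam : ℝ) (x : Fin d → ℤ)
    (ωe : Ωe) : ℝ :=
  -Real.log (∫ ω, Set.indicator (hits S x)
    (fun ω' => Real.exp (-(lam * (hitTime S x ω' : ℝ))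
      - quPotential V S (hitTime S x ω') ωe ω')) ω ∂P)

/-- Assumptions (Qu) on the random potential `𝕍 = (V_x)`: i.i.d., nonnegative, nontrivial,
in `L^d`, with essential infimum `0`. -/
def IsIIDPotential {d : ℕ} {Ωe : Type*} [MeasurableSpace Ωe] (μ : Measure Ωe)
    (V : (Fin d → ℤ) → Ωe → ℝ) : Prop :=
  (∀ x, Measurable (V x)) ∧
    (∀ x, ∀ᵐ ωe ∂μ, 0 ≤ V x ωe) ∧
    iIndepFun V μ ∧
    (∀ x, Measure.map (V x) μ = Measure.map (V 0) μ) ∧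
    (¬∃ c : ℝ, V 0 =ᵐ[μ] fun _ => c) ∧
    MemLp (V 0) d μ ∧
    essInf (V 0) μ = 0

/-- The quenched shape theorem property for the family `α` of Lyapunov norms:
`a_λ(x_k, ·)/α_λ(x_k) → 1` almost surely along any `‖x_k‖₁ → ∞`. -/
def QuShape {d : ℕ} {Ω Ωe : Type*} [MeasurableSpace Ω] [MeasurableSpace Ωe]
    (P : Measure Ω) (μ : Measure Ωe) (V : (Fin d → ℤ) → Ωe → ℝ)
    (S : ℕ → Ω → Fin d → ℤ) (α : ℝ → (Fin d → ℝ) → ℝ) : Prop :=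
  ∀ lam : ℝ, 0 ≤ lam → ∃ F : Set Ωe, μ Fᶜ = 0 ∧
    ∀ ωe ∈ F, ∀ xs : ℕ → Fin d → ℤ, Tendsto (fun k => norm1Z (xs k)) atTop atTop →
      Tendsto (fun k => twoPointA P V S lam (xs k) ωe / α lam (zToR (xs k))) atTop (𝓝 1)

/-- The annealed shape theorem property for the family `β` of Lyapunov norms:
`b_λ(x_k)/β_λ(x_k) → 1` along any `‖x_k‖₁ → ∞`. -/
def AnShape {d : ℕ} {Ω : Type*} [MeasurableSpace Ω] (P : Measure Ω) (φ : ℝ → ℝ)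
    (S : ℕ → Ω → Fin d → ℤ) (β : ℝ → (Fin d → ℝ) → ℝ) : Prop :=
  ∀ lam : ℝ, 0 ≤ lam → ∀ xs : ℕ → Fin d → ℤ,
    Tendsto (fun k => norm1Z (xs k)) atTop atTop →
      Tendsto (fun k => twoPointB P φ S lam (xs k) / β lam (zToR (xs k))) atTop (𝓝 1)

/-- The rate function `x ↦ sup_{λ ≥ 0} (β_λ(x) − λ)`, with values in `EReal`. -/
def rateFn {d : ℕ} (β : ℝ → (Fin d → ℝ) → ℝ) (x : Fin d → ℝ) : EReal :=
  ⨆ (lam : ℝ) (_ : 0 ≤ lam), ((β lam x - lam : ℝ) : EReal)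

/-- The free energy `sup_{x ∈ ℝ^d} (h·x − I(x))`, with values in `EReal`. -/
def freeEnergySup {d : ℕ} (β : ℝ → (Fin d → ℝ) → ℝ) (h : Fin d → ℝ) : EReal :=
  ⨆ x : Fin d → ℝ, ((dotR h x : ℝ) : EReal) - rateFn β x

/-- The tilted rate function `x ↦ I(x) − h·x + sup_y (h·y − I(y))`. -/
def tiltedRate {d : ℕ} (β : ℝ → (Fin d → ℝ) → ℝ) (h x : Fin d → ℝ) : EReal :=
  rateFn β x - ((dotR h x : ℝ) : EReal) + freeEnergySup β h

/-- The annealed partition function `Z_n^h`. -/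
def Zan {d : ℕ} {Ω : Type*} [MeasurableSpace Ω] (P : Measure Ω) (φ : ℝ → ℝ)
    (S : ℕ → Ω → Fin d → ℤ) (h : Fin d → ℝ) (n : ℕ) : ℝ :=
  ∫ ω, Real.exp (dotR h (zToR (S n ω)) - annPotential φ S n ω) ∂P

/-- The annealed path measure `Q_n^h`, as an `ℝ≥0∞`-valued set function. -/
def Qan {d : ℕ} {Ω : Type*} [MeasurableSpace Ω] (P : Measure Ω) (φ : ℝ → ℝ)
    (S : ℕ → Ω → Fin d → ℤ) (h : Fin d → ℝ) (n : ℕ) (B : Set Ω) : ENNReal :=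
  (∫⁻ ω in B, ENNReal.ofReal (Real.exp (dotR h (zToR (S n ω)) - annPotential φ S n ω)) ∂P) /
    ∫⁻ ω, ENNReal.ofReal (Real.exp (dotR h (zToR (S n ω)) - annPotential φ S n ω)) ∂P

/-- The quenched partition function `Z_{n,ω}^h`. -/
def Zqu {d : ℕ} {Ω Ωe : Type*} [MeasurableSpace Ω] (P : Measure Ω)
    (V : (Fin d → ℤ) → Ωe → ℝ) (S : ℕ → Ω → Fin d → ℤ) (h : Fin d → ℝ) (n : ℕ)
    (ωe : Ωe) : ℝ :=
  ∫ ω, Real.exp (dotR h (zToR (S n ω)) - quPotential V S n ωe ω) ∂P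

/-- The quenched path measure `Q_{n,ω}^h`, as an `ℝ≥0∞`-valued set function. -/
def Qqu {d : ℕ} {Ω Ωe : Type*} [MeasurableSpace Ω] (P : Measure Ω)
    (V : (Fin d → ℤ) → Ωe → ℝ) (S : ℕ → Ω → Fin d → ℤ) (h : Fin d → ℝ) (n : ℕ)
    (ωe : Ωe) (B : Set Ω) : ENNReal :=
  (∫⁻ ω in B, ENNReal.ofReal (Real.exp (dotR h (zToR (S n ω)) - quPotential V S n ωe ω)) ∂P) /
    ∫⁻ ω, ENNReal.ofReal (Real.exp (dotR h (zToR (S n ω)) - quPotential V S n ωe ω)) ∂P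


/-! ### Auxiliary lemmas for the annealed rate function -/

private lemma norm1R_nonneg' {d : ℕ} (x : Fin d → ℝ) : 0 ≤ norm1R x :=
  Finset.sum_nonneg fun _ _ => abs_nonneg _

private lemma norm1R_eq_zero' {d : ℕ} (x : Fin d → ℝ) (h : norm1R x = 0) : x = 0 := by
  funext i
  have := (Finset.sum_eq_zero_iff_of_nonneg (fun i _ => abs_nonneg (x i))).1 h i (Finset.mem_univ i)
  simpa using abs_eq_zero.1 this

private lemma norm1R_smul' {d : ℕ} (c : ℝ) (x : Fin d → ℝ) :
    norm1R (c • x) = |c| * norm1R x := by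
  unfold norm1R
  rw [Finset.mul_sum]
  exact Finset.sum_congr rfl fun i _ => by simp [abs_mul]

private lemma norm1R_add_le' {d : ℕ} (x y : Fin d → ℝ) :
    norm1R (x + y) ≤ norm1R x + norm1R y := by
  unfold norm1R
  rw [← Finset.sum_add_distrib]
  exact Finset.sum_le_sum fun i _ => abs_add_le _ _

private lemma abs_le_norm1R' {d : ℕ} (x : Fin d → ℝ) (i : Fin d) : |x i| ≤ norm1R x :=
  Finset.single_le_sum (fun j _ => abs_nonneg (x j)) (Finset.mem_univ i)

private lemma norm1R_continuous' {d : ℕ} : Continuous (norm1R (d := d)) := by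
  unfold norm1R
  exact continuous_finset_sum _ fun i _ => (continuous_apply i).abs

private lemma abs_add_of_abs_le' (u v : ℝ) (h : |v| ≤ |u|) :
    |u + v| = |u| + (if 0 ≤ u then v else -v) := by
  rcases le_or_gt 0 u with h0 | h0
  · have h1 := (abs_le.1 h).1
    rw [abs_of_nonneg h0] at h1
    rw [if_pos h0, abs_of_nonneg h0, abs_of_nonneg (by linarith : (0:ℝ) ≤ u + v)]
  · have h2 := (abs_le.1 h).2
    rw [abs_of_neg h0] at h2
    rw [if_neg (not_le.2 h0), abs_of_neg h0, abs_of_nonpos (by linarith : u + v ≤ 0)]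
    ring

/-- A convex, nonnegative, bounded function on the closed `ℓ¹` unit ball satisfies a
quantitative upper-semicontinuity estimate at every point of the ball. -/
private lemma convex_usc_on_ball {d : ℕ} (f : (Fin d → ℝ) → ℝ) (M : ℝ) (hM : 0 < M)
    (hconv : ∀ x, norm1R x ≤ 1 → ∀ y, norm1R y ≤ 1 → ∀ a b : ℝ, 0 ≤ a → 0 ≤ b → a + b = 1 →
      f (a • x + b • y) ≤ a * f x + b * f y)
    (h0 : ∀ x, norm1R x ≤ 1 → 0 ≤ f x) (hMb : ∀ x, norm1R x ≤ 1 → f x ≤ M)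
    (x : Fin d → ℝ) (hx : norm1R x ≤ 1) (ε : ℝ) (hε : 0 < ε) :
    ∃ δ₀ > 0, ∀ y, norm1R y ≤ 1 → norm1R (y - x) < δ₀ → f y < f x + ε := by
  -- A common auxiliary step: if we can write `y = θ • x + (1-θ) • w` with `w` in the ball
  -- and `1 - θ = δ/ρ` small, we get the desired estimate.
  have main : ∀ ρ : ℝ, 0 < ρ → ∀ y, norm1R y ≤ 1 → ∀ θ w, norm1R w ≤ 1 →
      0 ≤ θ → θ ≤ 1 → y = θ • x + (1 - θ) • w → (1 - θ) * M < ε → f y < f x + ε := by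
    intro ρ hρ y hy θ w hwB hθ0 hθle hdecomp hsmall
    have hle := hconv x hx w hwB θ (1 - θ) hθ0 (by linarith) (by ring)
    rw [← hdecomp] at hle
    have hfw : f w ≤ M := hMb w hwB
    have hfx0 : 0 ≤ f x := h0 x hx
    have e1 : (1 - θ) * f w ≤ (1 - θ) * M := mul_le_mul_of_nonneg_left hfw (by linarith)
    have e2 : θ * f x ≤ f x := by nlinarith
    linarith
  rcases lt_or_eq_of_le hx with hx1 | hx1
  · -- interior case
    obtain ⟨r, hr⟩ : ∃ t : ℝ, t = 1 - norm1R x := ⟨_, rfl⟩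
    have hrpos : 0 < r := by rw [hr]; linarith
    refine ⟨min (r/2) (r*ε/(2*M)), by positivity, fun y hy hδ => ?_⟩
    obtain ⟨δ, hδd⟩ : ∃ t : ℝ, t = norm1R (y - x) := ⟨_, rfl⟩
    rw [← hδd] at hδ
    rcases eq_or_lt_of_le (hδd ▸ norm1R_nonneg' (y - x)) with hδ0 | hδpos
    · have hyx : y = x := sub_eq_zero.1 (norm1R_eq_zero' _ (hδd.symm.trans hδ0.symm))
      rw [hyx]; linarith
    have hδr : δ < r/2 := lt_of_lt_of_le hδ (min_le_left _ _)
    have hδε : δ < r*ε/(2*M) := lt_of_lt_of_le hδ (min_le_right _ _)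
    obtain ⟨w, hw⟩ : ∃ w' : Fin d → ℝ, w' = x + (r/δ) • (y - x) := ⟨_, rfl⟩
    have hwB : norm1R w ≤ 1 := by
      have h1 : norm1R w ≤ norm1R x + norm1R ((r/δ) • (y - x)) := by
        rw [hw]; exact norm1R_add_le' _ _
      rw [norm1R_smul', abs_of_nonneg (by positivity : (0:ℝ) ≤ r/δ), ← hδd] at h1
      have h2 : r/δ * δ = r := by field_simp
      rw [h2, hr] at h1
      linarith
    have hθ0 : 0 ≤ 1 - δ/r := by
      have : δ/r ≤ 1 := (div_le_one hrpos).2 (by linarith)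
      linarith
    have hθle : 1 - δ/r ≤ 1 := by
      have : 0 ≤ δ/r := by positivity
      linarith
    refine main r hrpos y hy (1 - δ/r) w hwB hθ0 hθle ?_ ?_
    · funext i
      rw [hw, hδd]
      simp only [Pi.add_apply, Pi.smul_apply, Pi.sub_apply, smul_eq_mul]
      have hne : norm1R (y - x) ≠ 0 := by rw [← hδd]; exact hδpos.ne'
      field_simp
      ring
    · have h5 : δ * M < (r*ε/(2*M)) * M := mul_lt_mul_of_pos_right hδε hM
      have h6 : (r*ε/(2*M)) * M = r*ε/2 := by field_simp
      have h7 : (1 - (1 - δ/r)) * M = δ/r * M := by ring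
      rw [h7, div_mul_eq_mul_div, div_lt_iff₀ hrpos]
      nlinarith
  · -- boundary case : norm1R x = 1
    have hxne : ∃ i, x i ≠ 0 := by
      by_contra h
      push_neg at h
      have : norm1R x = 0 := by simp [norm1R, h]
      rw [this] at hx1; norm_num at hx1
    have hTne : (Finset.univ.filter (fun i => x i ≠ 0)).Nonempty := by
      obtain ⟨i, hi⟩ := hxne; exact ⟨i, by simp [hi]⟩
    obtain ⟨ρ, hρ⟩ : ∃ t : ℝ, t = (Finset.univ.filter (fun i => x i ≠ 0)).inf' hTne
        (fun i => |x i|) := ⟨_, rfl⟩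
    have hρpos : 0 < ρ := by
      rw [hρ, Finset.lt_inf'_iff]
      intro i hi
      exact abs_pos.2 (by simpa using hi)
    have hρle : ∀ i, x i ≠ 0 → ρ ≤ |x i| := fun i hi => by
      rw [hρ]; exact Finset.inf'_le _ (by simp [hi])
    refine ⟨min (ρ/2) (ρ*ε/(2*M)), by positivity, fun y hy hδ => ?_⟩
    obtain ⟨δ, hδd⟩ : ∃ t : ℝ, t = norm1R (y - x) := ⟨_, rfl⟩
    rw [← hδd] at hδ
    rcases eq_or_lt_of_le (hδd ▸ norm1R_nonneg' (y - x)) with hδ0 | hδpos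
    · have hyx : y = x := sub_eq_zero.1 (norm1R_eq_zero' _ (hδd.symm.trans hδ0.symm))
      rw [hyx]; linarith
    have hδρ : δ < ρ/2 := lt_of_lt_of_le hδ (min_le_left _ _)
    have hδε : δ < ρ*ε/(2*M) := lt_of_lt_of_le hδ (min_le_right _ _)
    obtain ⟨c, hc⟩ : ∃ t : ℝ, t = ρ/δ := ⟨_, rfl⟩
    have hc0 : 0 ≤ c := by rw [hc]; positivity
    obtain ⟨w, hw⟩ : ∃ w' : Fin d → ℝ, w' = x + c • (y - x) := ⟨_, rfl⟩
    have habs : ∀ i, |y i - x i| ≤ δ := by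
      intro i
      have h1 := abs_le_norm1R' (y - x) i
      rw [← hδd] at h1
      simpa using h1
    have hterm : ∀ i, |w i| = |x i| + c * (|y i| - |x i|) := by
      intro i
      have hwi : w i = x i + c * (y i - x i) := by
        rw [hw]; simp [Pi.add_apply, Pi.smul_apply, smul_eq_mul]
      by_cases hxi : x i = 0
      · rw [hwi, hxi]
        simp [abs_mul, abs_of_nonneg hc0]
      · have hρi : ρ ≤ |x i| := hρle i hxi
        have h1 : |c * (y i - x i)| ≤ |x i| := by
          rw [abs_mul, abs_of_nonneg hc0]
          have h2 : c * |y i - x i| ≤ c * δ := mul_le_mul_of_nonneg_left (habs i) hc0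
          have hcδ : c * δ = ρ := by rw [hc]; field_simp
          linarith
        rw [hwi, abs_add_of_abs_le' _ _ h1]
        rcases lt_or_gt_of_ne hxi with hneg | hpos
        · rw [if_neg (not_le.2 hneg)]
          have hb := abs_le.1 (habs i)
          have hρi' : ρ ≤ -(x i) := by rw [abs_of_neg hneg] at hρi; linarith
          have hyineg : y i < 0 := by linarith [hb.2]
          rw [abs_of_neg hneg, abs_of_neg hyineg]
          ring
        · rw [if_pos hpos.le]
          have hb := abs_le.1 (habs i)
          have hρi' : ρ ≤ x i := by rw [abs_of_pos hpos] at hρi; linarith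
          have hyipos : 0 < y i := by linarith [hb.1]
          rw [abs_of_pos hpos, abs_of_pos hyipos]
    have hwnorm : norm1R w = norm1R x + c * (norm1R y - norm1R x) := by
      unfold norm1R
      calc (∑ i, |w i|) = ∑ i, (|x i| + c * (|y i| - |x i|)) :=
            Finset.sum_congr rfl fun i _ => hterm i
        _ = (∑ i, |x i|) + c * ((∑ i, |y i|) - (∑ i, |x i|)) := by
            rw [Finset.sum_add_distrib, ← Finset.mul_sum, Finset.sum_sub_distrib]
    have hwB : norm1R w ≤ 1 := by
      rw [hwnorm, ← hx1]
      have := mul_nonneg hc0 (sub_nonneg.2 hy)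
      nlinarith
    have hθ0 : 0 ≤ 1 - δ/ρ := by
      have : δ/ρ ≤ 1 := (div_le_one hρpos).2 (by linarith)
      linarith
    have hθle : 1 - δ/ρ ≤ 1 := by
      have : 0 ≤ δ/ρ := by positivity
      linarith
    refine main ρ hρpos y hy (1 - δ/ρ) w hwB hθ0 hθle ?_ ?_
    · funext i
      rw [hw, hc, hδd]
      simp only [Pi.add_apply, Pi.smul_apply, Pi.sub_apply, smul_eq_mul]
      have hne : norm1R (y - x) ≠ 0 := by rw [← hδd]; exact hδpos.ne'
      field_simp
      ring
    · have h5 : δ * M < (ρ*ε/(2*M)) * M := mul_lt_mul_of_pos_right hδε hM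
      have h6 : (ρ*ε/(2*M)) * M = ρ*ε/2 := by field_simp
      have h7 : (1 - (1 - δ/ρ)) * M = δ/ρ * M := by ring
      rw [h7, div_mul_eq_mul_div, div_lt_iff₀ hρpos]
      nlinarith

/-- The real-valued version of the annealed rate function. -/
private def rateAux {d : ℕ} (β : ℝ → (Fin d → ℝ) → ℝ) (x : Fin d → ℝ) : ℝ :=
  sSup ((fun lam => β lam x - lam) '' Ici 0)

/-- **Properties of the annealed rate function** (Flury, Section 4). The rate function
`J(x) = sup_{λ ≥ 0}(β_λ(x) − λ)` is lower semicontinuous and convex, its effective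
domain is the closed `ℓ¹` unit ball, `J` is continuous there, and `J` is a good rate
function: its level sets are compact. -/
theorem annealed_rate_function_properties
    {d : ℕ} (hd : 0 < d)
    (φ : ℝ → ℝ) (hφ : IsGoodPhi φ)
    (β : ℝ → (Fin d → ℝ) → ℝ)
    (hβnorm : ∀ lam : ℝ, 0 ≤ lam → IsNorm (β lam))
    (hβcont : ContinuousOn (fun p : ℝ × (Fin d → ℝ) => β p.1 p.2) (Ici 0 ×ˢ univ))
    (hβconc : ∀ x : Fin d → ℝ, ConcaveOn ℝ (Ici 0) (fun lam => β lam x))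
    (hβmono : ∀ x : Fin d → ℝ, MonotoneOn (fun lam => β lam x) (Ici 0))
    (hβbounds : ∀ lam : ℝ, 0 ≤ lam → ∀ x : Fin d → ℝ,
      norm1R x * (lam + φ 1) ≤ β lam x ∧
        β lam x ≤ norm1R x * (lam + Real.log (2 * (d : ℝ)) + φ 1)) :
    LowerSemicontinuous (rateFn β) ∧
    (∀ x y : Fin d → ℝ, ∀ a b : ℝ, 0 ≤ a → 0 ≤ b → a + b = 1 →
      rateFn β (a • x + b • y) ≤
        ((a : ℝ) : EReal) * rateFn β x + ((b : ℝ) : EReal) * rateFn β y) ∧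
    {x : Fin d → ℝ | rateFn β x < ⊤} = {x : Fin d → ℝ | norm1R x ≤ 1} ∧
    ContinuousOn (rateFn β) {x : Fin d → ℝ | norm1R x ≤ 1} ∧
    ∀ c : ℝ, IsCompact {x : Fin d → ℝ | rateFn β x ≤ (c : EReal)} := by
  -- basic positivity facts
  have hφ1 : 0 ≤ φ 1 := hφ.2.1 1 zero_le_one
  have hd1 : (1:ℝ) ≤ (d:ℝ) := by exact_mod_cast hd
  have hL : 0 < Real.log (2 * (d:ℝ)) := Real.log_pos (by linarith)
  have hM : 0 < Real.log (2 * (d:ℝ)) + φ 1 := by linarith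
  -- continuity of `β lam` in `x` for each fixed `lam ≥ 0`
  have hβc : ∀ lam : ℝ, 0 ≤ lam → Continuous fun x : Fin d → ℝ => β lam x := by
    intro lam hl
    rw [← continuousOn_univ]
    intro x _
    have h1 : ContinuousWithinAt (fun p : ℝ × (Fin d → ℝ) => β p.1 p.2)
        (Ici 0 ×ˢ univ) (lam, x) := hβcont (lam, x) ⟨hl, trivial⟩
    have h2 : ContinuousWithinAt (fun x : Fin d → ℝ => ((lam, x) : ℝ × (Fin d → ℝ)))
        univ x := (Continuous.prodMk continuous_const continuous_id).continuousWithinAt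
    exact h1.comp h2 fun y _ => ⟨hl, trivial⟩
  -- upper bound on the terms, over the unit ball
  have hterm : ∀ lam : ℝ, 0 ≤ lam → ∀ x : Fin d → ℝ, norm1R x ≤ 1 →
      β lam x - lam ≤ Real.log (2 * (d:ℝ)) + φ 1 := by
    intro lam hl x hx
    have h1 := (hβbounds lam hl x).2
    have h2 : norm1R x * (lam + Real.log (2 * (d:ℝ)) + φ 1) ≤
        lam + Real.log (2 * (d:ℝ)) + φ 1 := by
      have h3 : 0 ≤ lam + Real.log (2 * (d:ℝ)) + φ 1 := by linarith
      nlinarith [norm1R_nonneg' x]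
    linarith
  -- the sets of values
  have hSne : ∀ x : Fin d → ℝ, ((fun lam => β lam x - lam) '' Ici 0).Nonempty :=
    fun x => ⟨β 0 x - 0, 0, self_mem_Ici, rfl⟩
  have hSbdd : ∀ x : Fin d → ℝ, norm1R x ≤ 1 →
      BddAbove ((fun lam => β lam x - lam) '' Ici 0) := by
    intro x hx
    refine ⟨Real.log (2 * (d:ℝ)) + φ 1, ?_⟩
    rintro a ⟨lam, hl, rfl⟩
    exact hterm lam hl x hx
  have hrate_ge : ∀ (x : Fin d → ℝ) (lam : ℝ), 0 ≤ lam →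
      ((β lam x - lam : ℝ) : EReal) ≤ rateFn β x := by
    intro x lam hl
    exact le_iSup₂ (f := fun lam (_ : 0 ≤ lam) => ((β lam x - lam : ℝ) : EReal)) lam hl
  have hrate_nonneg : ∀ x : Fin d → ℝ, 0 ≤ rateFn β x := by
    intro x
    have h1 := hrate_ge x 0 le_rfl
    have h2 : (0:EReal) ≤ ((β 0 x - 0 : ℝ) : EReal) := by
      rw [EReal.coe_nonneg]
      have := (hβnorm 0 le_rfl).1 x
      linarith
    exact h2.trans h1
  have hrate_top : ∀ x : Fin d → ℝ, 1 < norm1R x → rateFn β x = ⊤ := by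
    intro x hx
    rw [EReal.eq_top_iff_forall_lt]
    intro r
    obtain ⟨lam, hlam⟩ : ∃ t : ℝ, t = (|r| + 1)/(norm1R x - 1) := ⟨_, rfl⟩
    have hne : (0:ℝ) < norm1R x - 1 := by linarith
    have hl : 0 ≤ lam := by rw [hlam]; positivity
    have h1 := (hβbounds lam hl x).1
    have h2 : lam * (norm1R x - 1) = |r| + 1 := by
      rw [hlam]; field_simp
    have h3 : r < β lam x - lam := by
      nlinarith [abs_nonneg r, le_abs_self r, mul_nonneg (norm1R_nonneg' x) hφ1]
    exact lt_of_lt_of_le (EReal.coe_lt_coe_iff.2 h3) (hrate_ge x lam hl)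
  -- identification with the real-valued function on the unit ball
  have hrate_eq : ∀ x : Fin d → ℝ, norm1R x ≤ 1 →
      rateFn β x = ((rateAux β x : ℝ) : EReal) := by
    intro x hx
    have h1 : rateFn β x ≤ ((rateAux β x : ℝ) : EReal) := by
      refine iSup_le fun lam => iSup_le fun hl => ?_
      exact EReal.coe_le_coe_iff.2 (le_csSup (hSbdd x hx) ⟨lam, hl, rfl⟩)
    refine le_antisymm h1 ?_
    have hnetop : rateFn β x ≠ ⊤ := (h1.trans_lt (EReal.coe_lt_top _)).ne
    have hnebot : rateFn β x ≠ ⊥ := by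
      intro h
      have := hrate_nonneg x
      rw [h] at this
      simp at this
    rw [← EReal.coe_toReal hnetop hnebot]
    refine EReal.coe_le_coe_iff.2 (csSup_le (hSne x) ?_)
    rintro a ⟨lam, hl, rfl⟩
    have h2 := hrate_ge x lam hl
    rw [← EReal.coe_toReal hnetop hnebot] at h2
    exact EReal.coe_le_coe_iff.1 h2
  -- bounds for rateAux
  have haux0 : ∀ x : Fin d → ℝ, norm1R x ≤ 1 → 0 ≤ rateAux β x := by
    intro x hx
    have h1 : β 0 x - 0 ≤ rateAux β x := le_csSup (hSbdd x hx) ⟨0, self_mem_Ici, rfl⟩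
    have := (hβnorm 0 le_rfl).1 x
    linarith
  have hauxM : ∀ x : Fin d → ℝ, norm1R x ≤ 1 →
      rateAux β x ≤ Real.log (2 * (d:ℝ)) + φ 1 := by
    intro x hx
    refine csSup_le (hSne x) ?_
    rintro a ⟨lam, hl, rfl⟩
    exact hterm lam hl x hx
  -- membership of convex combinations in the ball
  have hBconv : ∀ x y : Fin d → ℝ, norm1R x ≤ 1 → norm1R y ≤ 1 → ∀ a b : ℝ,
      0 ≤ a → 0 ≤ b → a + b = 1 → norm1R (a • x + b • y) ≤ 1 := by
    intro x y hx hy a b ha hb hab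
    have h1 : norm1R (a • x + b • y) ≤ norm1R (a • x) + norm1R (b • y) := norm1R_add_le' _ _
    rw [norm1R_smul', norm1R_smul', abs_of_nonneg ha, abs_of_nonneg hb] at h1
    nlinarith
  -- convexity of rateAux on the ball
  have hauxconv : ∀ x, norm1R x ≤ 1 → ∀ y, norm1R y ≤ 1 → ∀ a b : ℝ,
      0 ≤ a → 0 ≤ b → a + b = 1 →
      rateAux β (a • x + b • y) ≤ a * rateAux β x + b * rateAux β y := by
    intro x hx y hy a b ha hb hab
    refine csSup_le (hSne _) ?_
    rintro t ⟨lam, hl, rfl⟩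
    have htri : β lam (a • x + b • y) ≤ β lam (a • x) + β lam (b • y) :=
      (hβnorm lam hl).2.2.2 _ _
    have hha : β lam (a • x) = a * β lam x := by
      rw [(hβnorm lam hl).2.2.1 a x, abs_of_nonneg ha]
    have hhb : β lam (b • y) = b * β lam y := by
      rw [(hβnorm lam hl).2.2.1 b y, abs_of_nonneg hb]
    have hjx : β lam x - lam ≤ rateAux β x := le_csSup (hSbdd x hx) ⟨lam, hl, rfl⟩
    have hjy : β lam y - lam ≤ rateAux β y := le_csSup (hSbdd y hy) ⟨lam, hl, rfl⟩
    have e1 : a * (β lam x - lam) ≤ a * rateAux β x := mul_le_mul_of_nonneg_left hjx ha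
    have e2 : b * (β lam y - lam) ≤ b * rateAux β y := mul_le_mul_of_nonneg_left hjy hb
    have h4 : a * lam + b * lam = lam := by rw [← add_mul, hab, one_mul]
    show β lam (a • x + b • y) - lam ≤ a * rateAux β x + b * rateAux β y
    linarith
  -- lower semicontinuity
  have hLSC : LowerSemicontinuous (rateFn β) := by
    unfold rateFn
    refine lowerSemicontinuous_iSup fun lam => ?_
    by_cases hl : 0 ≤ lam
    · simp only [iSup_pos hl]
      exact (continuous_coe_real_ereal.comp
        ((hβc lam hl).sub continuous_const)).lowerSemicontinuous
    · simp only [iSup_neg hl]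
      exact lowerSemicontinuous_const
  -- continuity of rateAux on the ball
  have hauxcont : ContinuousOn (rateAux β) {x : Fin d → ℝ | norm1R x ≤ 1} := by
    intro x hx
    refine tendsto_order.2 ⟨?_, ?_⟩
    · intro b hb
      obtain ⟨a, ⟨lam, hl, rfl⟩, hba⟩ := exists_lt_of_lt_csSup (hSne x) hb
      have hc : Continuous fun y : Fin d → ℝ => β lam y - lam :=
        (hβc lam hl).sub continuous_const
      have hev : ∀ᶠ y in 𝓝 x, b < β lam y - lam :=
        Tendsto.eventually_const_lt hba (hc.tendsto x)
      filter_upwards [hev.filter_mono nhdsWithin_le_nhds, eventually_mem_nhdsWithin]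
        with y h1 h2
      exact h1.trans_le (le_csSup (hSbdd y h2) ⟨lam, hl, rfl⟩)
    · intro b hb
      obtain ⟨δ₀, hδ₀, hcl⟩ := convex_usc_on_ball (rateAux β) _ hM hauxconv haux0 hauxM
        x hx (b - rateAux β x) (by linarith)
      have hc : Continuous fun y : Fin d → ℝ => norm1R (y - x) :=
        norm1R_continuous'.comp (continuous_id.sub continuous_const)
      have h00 : norm1R ((x - x : Fin d → ℝ)) = 0 := by
        rw [sub_self]
        simp [norm1R]
      have hev : ∀ᶠ y in 𝓝 x, norm1R (y - x) < δ₀ := by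
        refine Tendsto.eventually_lt_const hδ₀ ?_
        have := hc.tendsto x
        rwa [h00] at this
      filter_upwards [hev.filter_mono nhdsWithin_le_nhds, eventually_mem_nhdsWithin]
        with y h1 h2
      have := hcl y h2 h1
      linarith
  refine ⟨hLSC, ?_, ?_, ?_, ?_⟩
  · -- convexity
    intro x y a b ha hb hab
    rcases eq_or_lt_of_le ha with ha0 | hapos
    · have ha0' : a = 0 := ha0.symm
      have hb1 : b = 1 := by linarith
      subst ha0' hb1
      simp
    rcases eq_or_lt_of_le hb with hb0 | hbpos
    · have hb0' : b = 0 := hb0.symm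
      have ha1 : a = 1 := by linarith
      subst hb0' ha1
      simp
    by_cases hxtop : rateFn β x = ⊤
    · rw [hxtop, EReal.mul_top_of_pos (by exact_mod_cast hapos)]
      have h1 : (0:EReal) ≤ ((b:ℝ):EReal) * rateFn β y :=
        mul_nonneg (by exact_mod_cast hb) (hrate_nonneg y)
      rw [EReal.top_add_of_ne_bot (by intro h; rw [h] at h1; simp at h1)]
      exact le_top
    by_cases hytop : rateFn β y = ⊤
    · rw [hytop, EReal.mul_top_of_pos (by exact_mod_cast hbpos)]
      have h1 : (0:EReal) ≤ ((a:ℝ):EReal) * rateFn β x :=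
        mul_nonneg (by exact_mod_cast ha) (hrate_nonneg x)
      rw [EReal.add_top_of_ne_bot (by intro h; rw [h] at h1; simp at h1)]
      exact le_top
    have hxB : norm1R x ≤ 1 := by
      by_contra h
      exact hxtop (hrate_top x (not_le.1 h))
    have hyB : norm1R y ≤ 1 := by
      by_contra h
      exact hytop (hrate_top y (not_le.1 h))
    have hzB : norm1R (a • x + b • y) ≤ 1 := hBconv x y hxB hyB a b ha hb hab
    rw [hrate_eq _ hxB, hrate_eq _ hyB, hrate_eq _ hzB, ← EReal.coe_mul, ← EReal.coe_mul,
      ← EReal.coe_add]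
    exact EReal.coe_le_coe_iff.2 (hauxconv x hxB y hyB a b ha hb hab)
  · -- effective domain
    ext x
    simp only [mem_setOf_eq]
    constructor
    · intro h
      by_contra hn
      rw [hrate_top x (not_le.1 hn)] at h
      exact lt_irrefl _ h
    · intro h
      rw [hrate_eq x h]
      exact EReal.coe_lt_top _
  · -- continuity on the ball
    have h1 : ContinuousOn (fun x : Fin d → ℝ => ((rateAux β x : ℝ) : EReal))
        {x : Fin d → ℝ | norm1R x ≤ 1} :=
      continuous_coe_real_ereal.comp_continuousOn hauxcont
    exact h1.congr fun x hx => hrate_eq x hx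
  · -- compactness of sublevel sets
    intro c
    have hclosed : IsClosed {x : Fin d → ℝ | rateFn β x ≤ (c : EReal)} :=
      hLSC.isClosed_preimage (c : EReal)
    have hsub : {x : Fin d → ℝ | rateFn β x ≤ (c : EReal)} ⊆
        {x : Fin d → ℝ | norm1R x ≤ 1} := by
      intro x hx
      by_contra h
      rw [mem_setOf_eq, hrate_top x (not_le.1 h)] at hx
      exact (EReal.coe_lt_top c).not_ge hx
    have hBbdd : Bornology.IsBounded {x : Fin d → ℝ | norm1R x ≤ 1} := by
      have hsb : {x : Fin d → ℝ | norm1R x ≤ 1} ⊆ Metric.closedBall 0 1 := by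
        intro x hx
        rw [Metric.mem_closedBall, dist_zero_right]
        rw [pi_norm_le_iff_of_nonneg zero_le_one]
        intro i
        rw [Real.norm_eq_abs]
        exact (abs_le_norm1R' x i).trans hx
      exact (Metric.isBounded_closedBall (x := (0 : Fin d → ℝ)) (r := 1)).subset hsb
    exact Metric.isCompact_of_isClosed_isBounded hclosed (hBbdd.subset hsub)

end RWRP
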